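/- A representation ρ of a group G into SU(2) is reducible (i.e., there exists a nontrivial proper complex subspace U of ℂ² with ρ(g)(U) ⊆ U for all g ∈ G) if and only if ρ is abelian (i.e., the image ρ(G) is an abelian subgroup of SU(2)). -/

import Mathlib

open Matrix


private lemma su2_entries {A : Matrix (Fin 2) (Fin 2) ℂ}
    (hA : A ∈ Matrix.specialUnitaryGroup (Fin 2) ℂ) :
    A 1 1 = (starRingEnd ℂ) (A 0 0) ∧ A 0 1 = -((starRingEnd ℂ) (A 1 0)) := by
  rw [Matrix.mem_specialUnitaryGroup_iff] at hA
  obtain ⟨hu, hd⟩ := hA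
  rw [Matrix.mem_unitaryGroup_iff'] at hu
  have h2 : A * A.adjugate = 1 := by rw [Matrix.mul_adjugate, hd, one_smul]
  have h3 : star A = A.adjugate := by
    have := Matrix.inv_eq_left_inv hu
    have := Matrix.inv_eq_right_inv h2
    exact ‹A⁻¹ = star A›.symm.trans ‹A⁻¹ = A.adjugate›
  rw [Matrix.adjugate_fin_two] at h3
  have ha := congrFun (congrFun h3 0) 0
  have hb := congrFun (congrFun h3 0) 1
  simp [Matrix.star_apply] at ha hb
  constructor
  · rw [ha]
  · rw [hb]; ring

private lemma su2_conj_eig {A : Matrix (Fin 2) (Fin 2) ℂ}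
    (hA : A ∈ Matrix.specialUnitaryGroup (Fin 2) ℂ) {v : Fin 2 → ℂ} {lam : ℂ}
    (h : A.mulVec v = lam • v) :
    A.mulVec ![-(starRingEnd ℂ) (v 1), (starRingEnd ℂ) (v 0)]
      = (starRingEnd ℂ) lam • ![-(starRingEnd ℂ) (v 1), (starRingEnd ℂ) (v 0)] := by
  obtain ⟨h11, h01⟩ := su2_entries hA
  have h0 := congrFun h 0
  have h1 := congrFun h 1
  simp [Matrix.mulVec, dotProduct, Fin.sum_univ_two] at h0 h1
  have h0c := congrArg (starRingEnd ℂ) h0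
  have h1c := congrArg (starRingEnd ℂ) h1
  simp [_root_.map_add, _root_.map_mul, h11, h01] at h0c h1c
  funext i
  fin_cases i <;>
      simp [Matrix.mulVec, dotProduct, Fin.sum_univ_two, h11, h01]
  · linear_combination -h1c
  · linear_combination h0c

/-- A representation `ρ : G → SU(2)` is reducible (has a nontrivial proper invariant
complex subspace of `ℂ²`) if and only if it is abelian (its image is an abelian
subgroup of `SU(2)`). -/
theorem su2_representation_reducible_iff_abelian
    {G : Type*} [Group G] (ρ : G →* Matrix.specialUnitaryGroup (Fin 2) ℂ) :
    (∃ U : Submodule ℂ (Fin 2 → ℂ), U ≠ ⊥ ∧ U ≠ ⊤ ∧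
        ∀ g : G, ∀ v ∈ U, ((ρ g : Matrix (Fin 2) (Fin 2) ℂ).mulVec v) ∈ U) ↔
    (∀ g h : G, ρ g * ρ h = ρ h * ρ g) := by
  constructor
  · rintro ⟨U, hbot, htop, hinv⟩ g h
    obtain ⟨v, hvU, hv0⟩ := Submodule.exists_mem_ne_zero_of_ne_bot hbot
    -- U = span {v}
    have hle : Submodule.span ℂ {v} ≤ U := by
      rw [Submodule.span_le]; simpa using hvU
    have hUlt : Module.finrank ℂ U < 2 := by
      have := Submodule.finrank_lt (K := ℂ) (V := Fin 2 → ℂ) htop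
      simpa [Module.finrank_fin_fun] using this
    have hspanv : Submodule.span ℂ {v} = U := by
      apply Submodule.eq_of_le_of_finrank_le hle
      rw [finrank_span_singleton hv0]
      omega
    have heig : ∀ g : G, ∃ lam : ℂ, (ρ g : Matrix (Fin 2) (Fin 2) ℂ).mulVec v = lam • v := by
      intro g
      have hmem := hinv g v hvU
      rw [← hspanv, Submodule.mem_span_singleton] at hmem
      obtain ⟨a, ha⟩ := hmem
      exact ⟨a, ha.symm⟩
    obtain ⟨lg, hlg⟩ := heig g
    obtain ⟨lh, hlh⟩ := heig h
    set w : Fin 2 → ℂ := ![-(starRingEnd ℂ) (v 1), (starRingEnd ℂ) (v 0)] with hw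
    have hwg := su2_conj_eig (ρ g).2 hlg
    have hwh := su2_conj_eig (ρ h).2 hlh
    -- span {v, w} = ⊤
    have hr : (starRingEnd ℂ) (v 0) * v 0 + (starRingEnd ℂ) (v 1) * v 1 ≠ 0 := by
      intro hc
      apply hv0
      have h0 : Complex.normSq (v 0) + Complex.normSq (v 1) = 0 := by
        have : ((Complex.normSq (v 0) + Complex.normSq (v 1) : ℝ) : ℂ) = 0 := by
          push_cast
          rw [← Complex.mul_conj (v 0), ← Complex.mul_conj (v 1)]
          linear_combination hc
        exact_mod_cast this
      have h1 := (add_eq_zero_iff_of_nonneg (Complex.normSq_nonneg _)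
        (Complex.normSq_nonneg _)).1 h0
      funext i
      fin_cases i
      · exact Complex.normSq_eq_zero.1 h1.1
      · exact Complex.normSq_eq_zero.1 h1.2
    have hspan : Submodule.span ℂ ({v, w} : Set (Fin 2 → ℂ)) = ⊤ := by
      rw [Submodule.eq_top_iff']
      intro x
      have hx : x = (((starRingEnd ℂ) (v 0) * v 0 + (starRingEnd ℂ) (v 1) * v 1)⁻¹ *
            ((starRingEnd ℂ) (v 0) * x 0 + (starRingEnd ℂ) (v 1) * x 1)) • v +
          (((starRingEnd ℂ) (v 0) * v 0 + (starRingEnd ℂ) (v 1) * v 1)⁻¹ *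
            (-(v 1) * x 0 + v 0 * x 1)) • w := by
        funext i
        fin_cases i <;>
          · simp only [hw, Pi.add_apply, Pi.smul_apply, smul_eq_mul,
              Fin.zero_eta, Fin.mk_one, Matrix.cons_val_zero, Matrix.cons_val_one, Matrix.head_cons]
            field_simp
            ring
      rw [hx]
      exact add_mem
        (Submodule.smul_mem _ _ (Submodule.subset_span (by simp)))
        (Submodule.smul_mem _ _ (Submodule.subset_span (by simp)))
    -- conclude
    apply Subtype.ext
    show ((ρ g * ρ h : Matrix.specialUnitaryGroup (Fin 2) ℂ) : Matrix (Fin 2) (Fin 2) ℂ) =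
      ((ρ h * ρ g : Matrix.specialUnitaryGroup (Fin 2) ℂ) : Matrix (Fin 2) (Fin 2) ℂ)
    push_cast
    apply Matrix.toLin'.injective
    apply LinearMap.ext_on hspan
    rintro x (rfl | rfl)
    · simp only [Matrix.toLin'_apply, ← Matrix.mulVec_mulVec, hlg, hlh,
        Matrix.mulVec_smul, smul_smul, mul_comm]
    · simp only [Matrix.toLin'_apply, ← Matrix.mulVec_mulVec, hw, hwg, hwh,
        Matrix.mulVec_smul, smul_smul, mul_comm]
  · intro hab
    by_cases hsc : ∀ g : G, ∃ c : ℂ, (ρ g : Matrix (Fin 2) (Fin 2) ℂ) = c • (1 : Matrix (Fin 2) (Fin 2) ℂ)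
    · refine ⟨Submodule.span ℂ {Pi.single (0 : Fin 2) (1 : ℂ)}, ?_, ?_, ?_⟩
      · rw [Ne, Submodule.span_singleton_eq_bot]
        intro hc
        have := congrFun hc 0
        simp at this
      · intro hc
        have hmem : (Pi.single (1 : Fin 2) (1 : ℂ) : Fin 2 → ℂ) ∈
            Submodule.span ℂ {Pi.single (0 : Fin 2) (1 : ℂ)} := by
          rw [hc]; exact Submodule.mem_top
        rw [Submodule.mem_span_singleton] at hmem
        obtain ⟨c, hcc⟩ := hmem
        have := congrFun hcc 1
        simp at this
      · intro g x hx
        obtain ⟨c, hc⟩ := hsc g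
        rw [hc, Matrix.smul_mulVec, Matrix.one_mulVec]
        exact Submodule.smul_mem _ _ hx
    · push_neg at hsc
      obtain ⟨g₀, hg₀⟩ := hsc
      obtain ⟨μ, hμ⟩ := Module.End.exists_eigenvalue
        (Matrix.toLin' ((ρ g₀ : Matrix (Fin 2) (Fin 2) ℂ)))
      refine ⟨Module.End.eigenspace (Matrix.toLin' ((ρ g₀ : Matrix (Fin 2) (Fin 2) ℂ))) μ,
        hμ, ?_, ?_⟩
      · intro hc
        apply hg₀ μ
        apply Matrix.toLin'.injective
        apply LinearMap.ext
        intro x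
        have hx : x ∈ Module.End.eigenspace
            (Matrix.toLin' ((ρ g₀ : Matrix (Fin 2) (Fin 2) ℂ))) μ := by
          rw [hc]; exact Submodule.mem_top
        rw [Module.End.mem_eigenspace_iff] at hx
        rw [hx]
        simp [Matrix.toLin'_apply, Matrix.smul_mulVec, Matrix.one_mulVec]
      · intro h x hx
        rw [Module.End.mem_eigenspace_iff, Matrix.toLin'_apply] at hx ⊢
        have hcomm : (ρ g₀ : Matrix (Fin 2) (Fin 2) ℂ) * (ρ h : Matrix (Fin 2) (Fin 2) ℂ) =
            (ρ h : Matrix (Fin 2) (Fin 2) ℂ) * (ρ g₀ : Matrix (Fin 2) (Fin 2) ℂ) := by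
          have := Subtype.ext_iff.1 (hab g₀ h)
          push_cast at this
          exact this
        rw [Matrix.mulVec_mulVec, hcomm, ← Matrix.mulVec_mulVec, hx, Matrix.mulVec_smul]
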